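/- arXiv:1503.06667 — 4 statements merged into one kernel-verified Lean document; each statement's English description precedes it below -/
import Mathlib

section
/- Let m > 0 and let u, v : ℝ → ℝ be continuously differentiable on [0,1] with u(x) ≥ 0 and v(x) ≥ 0 for all x ∈ [0,1]. Suppose that for every x ∈ [0,1] the pair satisfies the steady-state system (m + 2v(x))(m + v(x))·u′(x) + 2u(x)(2m + v(x))·v′(x) = 0 and 2v(x)(2m + u(x))·u′(x) + (m + 2u(x))(m + u(x))·v′(x) = 0. Then u and v are constant on [0,1]. In particular, for positive scent decay no non-constant (territorial) steady-state patterns can form in the local-interaction model. -/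
/-- For positive scent decay `m > 0`, any pair of nonnegative
continuously differentiable functions `u, v` on `[0,1]` satisfying the
steady-state system `A(m,u,v)·(u′,v′)ᵀ = 0` (written out row by row) must be
constant on `[0,1]`: no non-constant territorial patterns can form in the
local-interaction model. -/
theorem no_territorial_patterns_local
    (m : ℝ) (hm : 0 < m) (u v : ℝ → ℝ)
    (hu : ContDiffOn ℝ 1 u (Set.Icc 0 1))
    (hv : ContDiffOn ℝ 1 v (Set.Icc 0 1))
    (hu0 : ∀ x ∈ Set.Icc (0:ℝ) 1, 0 ≤ u x)
    (hv0 : ∀ x ∈ Set.Icc (0:ℝ) 1, 0 ≤ v x)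
    (heq1 : ∀ x ∈ Set.Icc (0:ℝ) 1,
      (m + 2 * v x) * (m + v x) * derivWithin u (Set.Icc 0 1) x
        + 2 * u x * (2 * m + v x) * derivWithin v (Set.Icc 0 1) x = 0)
    (heq2 : ∀ x ∈ Set.Icc (0:ℝ) 1,
      2 * v x * (2 * m + u x) * derivWithin u (Set.Icc 0 1) x
        + (m + 2 * u x) * (m + u x) * derivWithin v (Set.Icc 0 1) x = 0) :
    (∀ x ∈ Set.Icc (0:ℝ) 1, u x = u 0) ∧ (∀ x ∈ Set.Icc (0:ℝ) 1, v x = v 0) := by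
  -- generic constancy helper
  have key : ∀ f : ℝ → ℝ, (∀ x ∈ Set.Icc (0:ℝ) 1, HasDerivWithinAt f 0 (Set.Icc 0 1) x) →
      ∀ x ∈ Set.Icc (0:ℝ) 1, f x = f 0 := by
    intro f hf
    apply constant_of_derivWithin_zero
    · intro x hx; exact (hf x hx).differentiableWithinAt
    · intro x hx
      exact (hf x (Set.Ico_subset_Icc_self hx)).derivWithin
        (uniqueDiffOn_Icc one_pos x (Set.Ico_subset_Icc_self hx))
  -- first integral F₁ = u (m+2v)³/(m+v)²
  have hF1 : ∀ x ∈ Set.Icc (0:ℝ) 1,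
      HasDerivWithinAt (fun y => u y * (m + 2 * v y)^3 / (m + v y)^2) 0 (Set.Icc 0 1) x := by
    intro x hx
    have hU := ((hu.differentiableOn one_ne_zero) x hx).hasDerivWithinAt
    have hV := ((hv.differentiableOn one_ne_zero) x hx).hasDerivWithinAt
    have hvp : 0 < m + v x := by linarith [hv0 x hx]
    have h1 : HasDerivWithinAt (fun y => m + 2 * v y)
        (2 * derivWithin v (Set.Icc 0 1) x) (Set.Icc 0 1) x := (hV.const_mul 2).const_add m
    have h5 := (hU.mul (h1.pow 3)).div ((hV.const_add m).pow 2)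
      (by positivity : ((m + v x)^2 ≠ 0))
    refine h5.congr_deriv ?_; symm
    simp only [Pi.mul_apply, Pi.pow_apply]
    rw [eq_comm, div_eq_zero_iff]
    left
    have e1 := heq1 x hx
    push_cast
    linear_combination ((m + v x) * (m + 2 * v x)^2) * e1
  -- first integral F₂ = v (m+2u)³/(m+u)²
  have hF2 : ∀ x ∈ Set.Icc (0:ℝ) 1,
      HasDerivWithinAt (fun y => v y * (m + 2 * u y)^3 / (m + u y)^2) 0 (Set.Icc 0 1) x := by
    intro x hx
    have hU := ((hu.differentiableOn one_ne_zero) x hx).hasDerivWithinAt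
    have hV := ((hv.differentiableOn one_ne_zero) x hx).hasDerivWithinAt
    have hup : 0 < m + u x := by linarith [hu0 x hx]
    have h1 : HasDerivWithinAt (fun y => m + 2 * u y)
        (2 * derivWithin u (Set.Icc 0 1) x) (Set.Icc 0 1) x := (hU.const_mul 2).const_add m
    have h5 := (hV.mul (h1.pow 3)).div ((hU.const_add m).pow 2)
      (by positivity : ((m + u x)^2 ≠ 0))
    refine h5.congr_deriv ?_; symm
    simp only [Pi.mul_apply, Pi.pow_apply]
    rw [eq_comm, div_eq_zero_iff]
    left
    have e2 := heq2 x hx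
    push_cast
    linear_combination ((m + u x) * (m + 2 * u x)^2) * e2
  have h0mem : (0:ℝ) ∈ Set.Icc (0:ℝ) 1 := by norm_num
  obtain ⟨c1, hc1def⟩ : ∃ c1 : ℝ, c1 = u 0 * (m + 2 * v 0)^3 / (m + v 0)^2 := ⟨_, rfl⟩
  obtain ⟨c2, hc2def⟩ : ∃ c2 : ℝ, c2 = v 0 * (m + 2 * u 0)^3 / (m + u 0)^2 := ⟨_, rfl⟩
  have hF1c := key _ hF1
  have hF2c := key _ hF2
  rw [← hc1def] at hF1c
  rw [← hc2def] at hF2c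
  -- polynomial relations
  have rel1 : ∀ x ∈ Set.Icc (0:ℝ) 1, u x * (m + 2 * v x)^3 = c1 * (m + v x)^2 := by
    intro x hx
    have hvp : 0 < m + v x := by linarith [hv0 x hx]
    have h := hF1c x hx
    rw [div_eq_iff (by positivity : ((m + v x)^2 ≠ 0))] at h
    exact h
  have rel2 : ∀ x ∈ Set.Icc (0:ℝ) 1, v x * (m + 2 * u x)^3 = c2 * (m + u x)^2 := by
    intro x hx
    have hup : 0 < m + u x := by linarith [hu0 x hx]
    have h := hF2c x hx
    rw [div_eq_iff (by positivity : ((m + u x)^2 ≠ 0))] at h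
    exact h
  by_cases hv00 : v 0 = 0
  · -- v ≡ 0, then u' = 0
    have hc2z : c2 = 0 := by rw [hc2def, hv00]; ring
    have hvz : ∀ x ∈ Set.Icc (0:ℝ) 1, v x = 0 := by
      intro x hx
      have h := rel2 x hx
      rw [hc2z, zero_mul] at h
      have hq : (0:ℝ) < (m + 2 * u x)^3 := by
        have := hu0 x hx; positivity
      rcases mul_eq_zero.1 h with h' | h'
      · exact h'
      · exact absurd h' (ne_of_gt hq)
    have hvconst : ∀ x ∈ Set.Icc (0:ℝ) 1, v x = v 0 := by
      intro x hx; rw [hvz x hx, hv00]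
    have hVz : ∀ x ∈ Set.Icc (0:ℝ) 1, derivWithin v (Set.Icc 0 1) x = 0 := by
      intro x hx
      have h0 : HasDerivWithinAt v 0 (Set.Icc 0 1) x :=
        (hasDerivWithinAt_const x (Set.Icc (0:ℝ) 1) (0:ℝ)).congr
          (fun y hy => hvz y hy) (hvz x hx)
      exact h0.derivWithin (uniqueDiffOn_Icc one_pos x hx)
    have huconst : ∀ x ∈ Set.Icc (0:ℝ) 1, u x = u 0 := by
      apply key
      intro x hx
      have e1 := heq1 x hx
      rw [hvz x hx, hVz x hx] at e1
      have hU := ((hu.differentiableOn one_ne_zero) x hx).hasDerivWithinAt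
      have hU0 : derivWithin u (Set.Icc 0 1) x = 0 := by
        have h' : m * m * derivWithin u (Set.Icc 0 1) x = 0 := by linear_combination e1
        have hm2 : (m * m : ℝ) ≠ 0 := by positivity
        exact (mul_eq_zero.mp h').resolve_left hm2
      rwa [hU0] at hU
    exact ⟨huconst, hvconst⟩
  · -- v 0 > 0, so c2 > 0
    have hv0pos : 0 < v 0 := lt_of_le_of_ne (hv0 0 h0mem) (Ne.symm hv00)
    have hu00 : 0 ≤ u 0 := hu0 0 h0mem
    have hc2pos : 0 < c2 := by rw [hc2def]; positivity
    -- key polynomial identity along the solution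
    have hpsi : ∀ x ∈ Set.Icc (0:ℝ) 1,
        u x * (m * (m + 2 * u x)^3 + 2 * c2 * (m + u x)^2)^3
          - c1 * (m * (m + 2 * u x)^3 + c2 * (m + u x)^2)^2 * (m + 2 * u x)^3 = 0 := by
      intro x hx
      have hup : 0 ≤ u x := hu0 x hx
      have hqne : ((m + 2 * u x)^3 : ℝ) ≠ 0 := by positivity
      have h2 := rel2 x hx
      have hw : v x = c2 * (m + u x)^2 / (m + 2 * u x)^3 := by
        rw [eq_div_iff hqne]; exact h2
      have h1 := rel1 x hx
      rw [hw] at h1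
      field_simp at h1
      have h1c : u x * (m * (m + 2 * u x)^3 + 2 * c2 * (m + u x)^2)^3
          = c1 * (m * (m + 2 * u x)^3 + c2 * (m + u x)^2)^2 * (m + 2 * u x)^3 := by
        have hQ2 : ((((m + 2 * u x)^3)^2 : ℝ)) ≠ 0 := by positivity
        apply mul_right_cancel₀ hQ2
        linear_combination ((m + 2 * u x)^3)^2 * h1
      linear_combination h1c
    -- u is constant
    have huconst : ∀ x ∈ Set.Icc (0:ℝ) 1, u x = u 0 := by
      by_contra hcon
      push_neg at hcon
      obtain ⟨x₁, hx₁, hne⟩ := hcon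
      have hsub : Set.uIcc 0 x₁ ⊆ Set.Icc (0:ℝ) 1 := by
        rw [Set.uIcc_of_le hx₁.1]
        exact Set.Icc_subset_Icc le_rfl hx₁.2
      have hiv := intermediate_value_uIcc ((hu.continuousOn).mono hsub)
      -- the elimination polynomial
      set P : Polynomial ℝ :=
        Polynomial.X * (Polynomial.C m * (Polynomial.C m + Polynomial.C 2 * Polynomial.X)^3
            + Polynomial.C (2 * c2) * (Polynomial.C m + Polynomial.X)^2)^3
          - Polynomial.C c1 * (Polynomial.C m * (Polynomial.C m + Polynomial.C 2 * Polynomial.X)^3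
            + Polynomial.C c2 * (Polynomial.C m + Polynomial.X)^2)^2
            * (Polynomial.C m + Polynomial.C 2 * Polynomial.X)^3 with hP
      have hevalP : ∀ t : ℝ, P.eval t =
          t * (m * (m + 2 * t)^3 + 2 * c2 * (m + t)^2)^3
            - c1 * (m * (m + 2 * t)^3 + c2 * (m + t)^2)^2 * (m + 2 * t)^3 := by
        intro t
        simp only [hP, Polynomial.eval_mul, Polynomial.eval_add, Polynomial.eval_sub,
          Polynomial.eval_pow, Polynomial.eval_C, Polynomial.eval_X, Polynomial.eval_ofNat]
      have hroots : Set.uIcc (u 0) (u x₁) ⊆ {t : ℝ | P.IsRoot t} := by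
        intro t ht
        obtain ⟨y, hy, rfl⟩ := hiv ht
        have hy' : y ∈ Set.Icc (0:ℝ) 1 := hsub hy
        show P.IsRoot (u y)
        rw [Polynomial.IsRoot, hevalP]
        exact hpsi y hy'
      have hinf : {t : ℝ | P.IsRoot t}.Infinite := by
        apply Set.Infinite.mono hroots
        rcases lt_or_gt_of_ne (Ne.symm hne) with h | h
        · rw [Set.uIcc_of_le h.le]; exact Set.Icc_infinite h
        · rw [Set.uIcc_of_ge h.le]; exact Set.Icc_infinite h
      have hP0 : P = 0 := P.eq_zero_of_infinite_isRoot hinf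
      have hev := hevalP (-m/2)
      rw [hP0, Polynomial.eval_zero] at hev
      have hz : c2^3 * m^7 = 0 := by linear_combination (16 : ℝ) * hev
      have hpos : (0:ℝ) < c2^3 * m^7 := by positivity
      linarith
    -- now v is constant
    have hvconst : ∀ x ∈ Set.Icc (0:ℝ) 1, v x = v 0 := by
      intro x hx
      have h2 := rel2 x hx
      have h20 := rel2 0 h0mem
      rw [huconst x hx] at h2
      have hq : ((m + 2 * u 0)^3 : ℝ) ≠ 0 := by positivity
      have := h2.trans h20.symm
      exact mul_right_cancel₀ hq this
    exact ⟨huconst, hvconst⟩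
end

section
/- For each fixed real m ≠ 0, the set {(u,v) ∈ ℝ² : f(m,u,v) = 0 and g(m,u,v) = 0} is finite. Hence, on the branch where det A(m,u,v) = 0, there are only finitely many possible values for the steady-state densities (u,v). -/
/-- The polynomial `f(m,u,v) = (2m − 2v)u² + (3m² − 7mv − 2v²)u + (m³ + 3m²v + 2mv²)`. -/
noncomputable def fPoly (m u v : ℝ) : ℝ :=
  (2 * m - 2 * v) * u ^ 2 + (3 * m ^ 2 - 7 * m * v - 2 * v ^ 2) * u
    + (m ^ 3 + 3 * m ^ 2 * v + 2 * m * v ^ 2)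

/-- The polynomial `g(m,u,v) = (7mu − 3m² − 4mv + 2u² + 4uv)(m + 2v)(m + v)
+ (4mu + 2uv)(3m² − 7mv + 4mu − 2v² − 4uv)`. -/
noncomputable def gPoly (m u v : ℝ) : ℝ :=
  (7 * m * u - 3 * m ^ 2 - 4 * m * v + 2 * u ^ 2 + 4 * u * v) * (m + 2 * v) * (m + v)
    + (4 * m * u + 2 * u * v)
        * (3 * m ^ 2 - 7 * m * v + 4 * m * u - 2 * v ^ 2 - 4 * u * v)

/-- Resultant of `f` and `g` with respect to `u`. -/
noncomputable def rPoly (m v : ℝ) : ℝ :=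
  128*m*v^9 + 1984*m^2*v^8 + 5440*m^3*v^7 - 560*m^4*v^6 - 18440*m^5*v^5
    - 17144*m^6*v^4 + 7864*m^7*v^3 + 15592*m^8*v^2 + 5008*m^9*v + 128*m^10

lemma bezout (m u v : ℝ) :
    rPoly m v =
      ((64*v^6 + 160*m*v^5 - 368*m^2*v^4 - 1048*m^3*v^3 + 512*m^4*v^2 + 1832*m^5*v
          - 288*m^6) * u
        + (-64*v^7 - 96*m*v^6 + 160*m^2*v^5 - 360*m^3*v^4 - 1172*m^4*v^3 + 1328*m^5*v^2
          + 3100*m^6*v + 128*m^7)) * fPoly m u v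
      + ((-32*v^5 - 32*m*v^4 + 136*m^2*v^3 + 128*m^3*v^2 - 232*m^4*v + 32*m^5) * u
        + (-32*v^6 - 224*m*v^5 - 128*m^2*v^4 + 692*m^3*v^3 + 632*m^4*v^2 - 508*m^5*v))
          * gPoly m u v := by
  unfold rPoly fPoly gPoly; ring

/-- `rPoly m` as a `Polynomial` in `v`. -/
noncomputable def rX (m : ℝ) : Polynomial ℝ :=
  Polynomial.C (128*m) * Polynomial.X^9 + Polynomial.C (1984*m^2) * Polynomial.X^8
  + Polynomial.C (5440*m^3) * Polynomial.X^7 + Polynomial.C (-560*m^4) * Polynomial.X^6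
  + Polynomial.C (-18440*m^5) * Polynomial.X^5 + Polynomial.C (-17144*m^6) * Polynomial.X^4
  + Polynomial.C (7864*m^7) * Polynomial.X^3 + Polynomial.C (15592*m^8) * Polynomial.X^2
  + Polynomial.C (5008*m^9) * Polynomial.X + Polynomial.C (128*m^10)

lemma rX_eval (m v : ℝ) : (rX m).eval v = rPoly m v := by
  simp [rX, rPoly]; ring

lemma rX_ne_zero (m : ℝ) (hm : m ≠ 0) : rX m ≠ 0 := by
  intro h
  have h9 : (rX m).coeff 9 = 128 * m := by
    simp only [rX, Polynomial.coeff_add, Polynomial.coeff_C_mul, Polynomial.coeff_X_pow,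
      Polynomial.coeff_C, Polynomial.coeff_X]
    norm_num
  rw [h, Polynomial.coeff_zero] at h9
  exact hm (by linarith)

/-- `fPoly m · v` as a `Polynomial` in `u`. -/
noncomputable def fX (m v : ℝ) : Polynomial ℝ :=
  Polynomial.C (2*m - 2*v) * Polynomial.X^2
  + Polynomial.C (3*m^2 - 7*m*v - 2*v^2) * Polynomial.X
  + Polynomial.C (m^3 + 3*m^2*v + 2*m*v^2)

lemma fX_eval (m v u : ℝ) : (fX m v).eval u = fPoly m u v := by
  simp [fX, fPoly]

lemma fX_ne_zero (m v : ℝ) (hm : m ≠ 0) : fX m v ≠ 0 := by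
  intro h
  by_cases hv : 2*m - 2*v = 0
  · have hvm : v = m := by linarith
    have h1 : (fX m v).coeff 1 = 3*m^2 - 7*m*v - 2*v^2 := by
      simp only [fX, Polynomial.coeff_add, Polynomial.coeff_C_mul, Polynomial.coeff_X_pow,
        Polynomial.coeff_C, Polynomial.coeff_X]
      norm_num
    rw [h, Polynomial.coeff_zero] at h1
    rw [hvm] at h1
    have hm2 : 0 < m ^ 2 := by positivity
    nlinarith
  · have h2 : (fX m v).coeff 2 = 2*m - 2*v := by
      simp only [fX, Polynomial.coeff_add, Polynomial.coeff_C_mul, Polynomial.coeff_X_pow,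
        Polynomial.coeff_C, Polynomial.coeff_X]
      norm_num
    rw [h, Polynomial.coeff_zero] at h2
    exact hv h2.symm

/-- For each fixed real `m ≠ 0`, the set of common zeros
`{(u,v) ∈ ℝ² : f(m,u,v) = 0 ∧ g(m,u,v) = 0}` is finite: on the branch where
`det A(m,u,v) = 0` there are only finitely many possible steady-state values `(u,v)`. -/
theorem common_zeros_finite (m : ℝ) (hm : m ≠ 0) :
    {p : ℝ × ℝ | fPoly m p.1 p.2 = 0 ∧ gPoly m p.1 p.2 = 0}.Finite := by
  have hV : {v : ℝ | (rX m).IsRoot v}.Finite := Polynomial.finite_setOf_isRoot (rX_ne_zero m hm)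
  have hfib : ∀ v : ℝ, {u : ℝ | (fX m v).IsRoot u}.Finite :=
    fun v => Polynomial.finite_setOf_isRoot (fX_ne_zero m v hm)
  have hsub : {p : ℝ × ℝ | fPoly m p.1 p.2 = 0 ∧ gPoly m p.1 p.2 = 0} ⊆
      ⋃ v ∈ {v : ℝ | (rX m).IsRoot v}, (fun u => (u, v)) '' {u : ℝ | (fX m v).IsRoot u} := by
    rintro ⟨u, v⟩ ⟨hf, hg⟩
    have hr : rPoly m v = 0 := by
      rw [bezout m u v, hf, hg]; ring
    have hv' : v ∈ {v : ℝ | (rX m).IsRoot v} := by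
      rw [Set.mem_setOf_eq, Polynomial.IsRoot, rX_eval]; exact hr
    have hu' : u ∈ {u : ℝ | (fX m v).IsRoot u} := by
      rw [Set.mem_setOf_eq, Polynomial.IsRoot, fX_eval]; exact hf
    exact Set.mem_biUnion hv' ⟨u, hu', rfl⟩
  exact Set.Finite.subset (hV.biUnion fun v _ => (hfib v).image _) hsub
end

section
/- Let m > 0, let I ⊆ ℝ be an open interval, let u, v : I → ℝ be differentiable, and suppose f(m,u(y),v(y)) = 0 for all y ∈ I. Let x ∈ I be a point at which 3m² − 7m·v(x) + 4m·u(x) − 2v(x)² − 4u(x)v(x) ≠ 0, u′(x) ≠ 0, v′(x) ≠ 0, and at which the first steady-state equation (m + 2v(x))(m + v(x))·u′(x) + 2u(x)(2m + v(x))·v′(x) = 0 holds. Then g(m,u(x),v(x)) = 0. (Indeed, differentiating f = 0 yields u′(x) = v′(x)·(7mu − 3m² − 4mv + 2u² + 4uv)/(3m² − 7mv + 4mu − 2v² − 4uv) at x, and substituting this into the first steady-state equation gives g = 0.) -/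
/-- Let `m > 0`, let `I = (α, β)` be an open interval, let `u, v` be
differentiable on `I` with `f(m,u(y),v(y)) = 0` on `I`. If at a point `x ∈ I` we have
`3m² − 7m·v(x) + 4m·u(x) − 2v(x)² − 4u(x)v(x) ≠ 0`, `u′(x) ≠ 0`, `v′(x) ≠ 0`, and the
first steady-state equation
`(m + 2v(x))(m + v(x))·u′(x) + 2u(x)(2m + v(x))·v′(x) = 0` holds, then
`g(m,u(x),v(x)) = 0`. -/
theorem g_vanishes_on_steady_state
    (m : ℝ) (hm : 0 < m) (α β : ℝ) (u v : ℝ → ℝ)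
    (hu : ∀ y ∈ Set.Ioo α β, DifferentiableAt ℝ u y)
    (hv : ∀ y ∈ Set.Ioo α β, DifferentiableAt ℝ v y)
    (hf : ∀ y ∈ Set.Ioo α β, fPoly m (u y) (v y) = 0)
    (x : ℝ) (hx : x ∈ Set.Ioo α β)
    (hdenom : 3 * m ^ 2 - 7 * m * v x + 4 * m * u x - 2 * (v x) ^ 2
      - 4 * u x * v x ≠ 0)
    (hu' : deriv u x ≠ 0) (hv' : deriv v x ≠ 0)
    (hss : (m + 2 * v x) * (m + v x) * deriv u x
      + 2 * u x * (2 * m + v x) * deriv v x = 0) :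
    gPoly m (u x) (v x) = 0 := by
  have hUd := (hu x hx).hasDerivAt
  have hVd := (hv x hx).hasDerivAt
  have A := ((hasDerivAt_const x (2*m)).sub (hVd.const_mul 2)).mul (hUd.pow 2)
  have B := (((hasDerivAt_const x (3*m^2)).sub (hVd.const_mul (7*m))).sub
      ((hVd.pow 2).const_mul 2)).mul hUd
  have C := ((hasDerivAt_const x (m^3)).add (hVd.const_mul (3*m^2))).add
      ((hVd.pow 2).const_mul (2*m))
  have H := (A.add B).add C
  have hz : deriv (fun y => fPoly m (u y) (v y)) x = 0 := by
    have he : (fun y => fPoly m (u y) (v y)) =ᶠ[nhds x] (fun _ => (0:ℝ)) :=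
      Filter.eventuallyEq_of_mem (isOpen_Ioo.mem_nhds hx) hf
    rw [he.deriv_eq, deriv_const]
  have h0 := H.deriv.symm.trans hz
  have hkey : (3 * m ^ 2 - 7 * m * v x + 4 * m * u x - 2 * (v x) ^ 2 - 4 * u x * v x)
      * deriv u x
      = (7 * m * u x - 3 * m ^ 2 - 4 * m * v x + 2 * (u x) ^ 2 + 4 * u x * v x)
      * deriv v x := by
    simp only [Pi.sub_apply, Pi.add_apply, Pi.mul_apply, Pi.pow_apply] at h0
    push_cast at h0; linear_combination h0
  have hg : gPoly m (u x) (v x) * deriv v x = 0 := by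
    unfold gPoly
    linear_combination (-(m + 2 * v x) * (m + v x)) * hkey
      + (3 * m ^ 2 - 7 * m * v x + 4 * m * u x - 2 * (v x) ^ 2 - 4 * u x * v x) * hss
  exact (mul_eq_zero.mp hg).resolve_right hv'
end

section
/- For all real m and v, the discriminant of f(m,u,v) as a quadratic in u factors as (3m² − 7mv − 2v²)² − 4(2m − 2v)(m³ + 3m²v + 2mv²) = 4(v − γ₊m)(v − γ₋m)(v − ϑ₊m)(v − ϑ₋m), where γ± = (1/4)[−11 − 4√3 ± 2√(225/4 + 30√3)] and ϑ± = −11/4 + √3 ± (1/4)√(15(15 − 8√3)). -/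
open Real

/-- For all real `m`, `v`, the discriminant of `f(m,u,v)` as a
quadratic in `u` factors as
`(3m² − 7mv − 2v²)² − 4(2m − 2v)(m³ + 3m²v + 2mv²) = 4(v − γ₊m)(v − γ₋m)(v − ϑ₊m)(v − ϑ₋m)`,
where `γ± = (1/4)[−11 − 4√3 ± 2√(225/4 + 30√3)]` and
`ϑ± = −11/4 + √3 ± (1/4)√(15(15 − 8√3))`. -/
theorem discriminant_factorization (m v : ℝ) :
    (3 * m ^ 2 - 7 * m * v - 2 * v ^ 2) ^ 2
      - 4 * (2 * m - 2 * v) * (m ^ 3 + 3 * m ^ 2 * v + 2 * m * v ^ 2)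
    = 4 * (v - ((1 / 4) * (-11 - 4 * Real.sqrt 3
            + 2 * Real.sqrt (225 / 4 + 30 * Real.sqrt 3))) * m)
        * (v - ((1 / 4) * (-11 - 4 * Real.sqrt 3
            - 2 * Real.sqrt (225 / 4 + 30 * Real.sqrt 3))) * m)
        * (v - (-11 / 4 + Real.sqrt 3
            + (1 / 4) * Real.sqrt (15 * (15 - 8 * Real.sqrt 3))) * m)
        * (v - (-11 / 4 + Real.sqrt 3
            - (1 / 4) * Real.sqrt (15 * (15 - 8 * Real.sqrt 3))) * m) := by
  set s := Real.sqrt 3 with hs_def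
  set a := Real.sqrt (225 / 4 + 30 * s) with ha_def
  set b := Real.sqrt (15 * (15 - 8 * s)) with hb_def
  have hs : s ^ 2 = 3 := Real.sq_sqrt (by norm_num)
  have hs3 : (0:ℝ) ≤ s := Real.sqrt_nonneg 3
  have hsle : s ≤ 2 := by
    rw [hs_def]
    nlinarith [Real.sq_sqrt (show (0:ℝ) ≤ 3 by norm_num), Real.sqrt_nonneg 3]
  have ha : a ^ 2 = 225 / 4 + 30 * s :=
    Real.sq_sqrt (by nlinarith)
  have hb : b ^ 2 = 15 * (15 - 8 * s) :=
    Real.sq_sqrt (by nlinarith)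
  have h1 : (v - ((1 / 4) * (-11 - 4 * s + 2 * a)) * m)
      * (v - ((1 / 4) * (-11 - 4 * s - 2 * a)) * m)
      = v ^ 2 + (11 + 4 * s) / 2 * v * m + (-(7 : ℝ) - 4 * s) / 2 * m ^ 2 := by
    linear_combination m ^ 2 * hs - m ^ 2 / 4 * ha
  have h2 : (v - (-11 / 4 + s + (1 / 4) * b) * m)
      * (v - (-11 / 4 + s - (1 / 4) * b) * m)
      = v ^ 2 + (11 / 2 - 2 * s) * v * m + (-(7 : ℝ) / 2 + 2 * s) * m ^ 2 := by
    linear_combination m ^ 2 * hs - m ^ 2 / 16 * hb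
  linear_combination
    (-4 * ((v - (-11 / 4 + s + (1 / 4) * b) * m)
      * (v - (-11 / 4 + s - (1 / 4) * b) * m))) * h1
    + (-4 * (v ^ 2 + (11 + 4 * s) / 2 * v * m + (-(7 : ℝ) - 4 * s) / 2 * m ^ 2)) * h2
    + (16 * v ^ 2 * m ^ 2 - 32 * v * m ^ 3 + 16 * m ^ 4) * hs
end
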